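/- Let λ be a partition with Frobenius notation (p₁,...,p_N | q₁,...,q_N) and let s = (s_{ij}) be a complex filling of λ that is constant on diagonals (s_{ij} = z_{j−i}). If T is a σ-tableau of shape λ for σ ∈ S_N, then the weight factorizes: w(s,T) = ∏_{k=1}^N w(s^F_{k,σ(k)}, T_k(σ)), where T_k(σ) is the hook tableau formed from the arm of row k of T and the leg (with diagonal entry) of column σ(k) of T, and s^F_{k,σ(k)} is the corresponding hook filling (z₀, z₁,...,z_{p_k} along the row; z_{−1},...,z_{−q_{σ(k)}} down the column). -/

import Mathlib

open scoped BigOperators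

/-- Boxes of Young-type diagrams, as pairs of natural numbers (row, column). -/
abbrev Box : Type := ℕ × ℕ

/-- Semistandardness of a filling `t` of the (generalized, possibly skew or laced)
shape `θ`: positive entries, weakly increasing along rows, strictly increasing
down columns, normalized to `1` outside the shape. -/
def IsSSYT (θ : Finset Box) (t : Box → ℕ) : Prop :=
  (∀ x ∈ θ, 0 < t x) ∧
  (∀ i j : ℕ, (i, j) ∈ θ → (i, j + 1) ∈ θ → t (i, j) ≤ t (i, j + 1)) ∧
  (∀ i j : ℕ, (i, j) ∈ θ → (i + 1, j) ∈ θ → t (i, j) < t (i + 1, j)) ∧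
  (∀ x, x ∉ θ → t x = 1)

/-- The type of semistandard Young tableaux of shape `θ`. -/
def SSYT (θ : Finset Box) : Type := {t : Box → ℕ // IsSSYT θ t}

/-- The weight `w(s, t) = ∏_{x ∈ θ} t(x)^{-s(x)}` of a filling `t` with complex
exponents `s`. -/
noncomputable def wt (θ : Finset Box) (s : Box → ℂ) (t : Box → ℕ) : ℂ :=
  ∏ x ∈ θ, (t x : ℂ) ^ (-(s x))

/-- The Schur multiple zeta value attached to a shape `θ` and a complex filling `s`. -/
noncomputable def zetaS (θ : Finset Box) (s : Box → ℂ) : ℂ :=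
  ∑' T : SSYT θ, wt θ s T.1

/-- The corners of a shape: boxes having no neighbour to the right nor below. -/
def corners (θ : Finset Box) : Finset Box :=
  θ.filter fun x => (x.1, x.2 + 1) ∉ θ ∧ (x.1 + 1, x.2) ∉ θ

/-- The Young diagram (0-indexed) with Frobenius notation `(p₁,…,p_N | q₁,…,q_N)`:
for each `k < N` the diagonal box `(k,k)`, the arm `(k, k+1), …, (k, k + p k)`
and the leg `(k+1, k), …, (k + q k, k)`. -/
def frobShape (N : ℕ) (p q : ℕ → ℕ) : Finset Box :=
  (Finset.range N).biUnion fun k =>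
    ((Finset.range (p k + 1)).image fun a => (k, k + a)) ∪
    ((Finset.range (q k)).image fun b => (k + 1 + b, k))

/-- The hook shape `(a+1, 1^b)`. -/
def hookShape (a b : ℕ) : Finset Box := frobShape 1 (fun _ => a) (fun _ => b)

/-- Valid Frobenius data: the arm and leg lengths are strictly decreasing. -/
def FrobData (N : ℕ) (p q : ℕ → ℕ) : Prop :=
  ∀ k : ℕ, k + 1 < N → p (k + 1) < p k ∧ q (k + 1) < q k

/-- The arm region `D(p)` of `λ = (p | q)`. -/
def Dp (N : ℕ) (p : ℕ → ℕ) : Finset Box :=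
  (Finset.range N).biUnion fun k => (Finset.range (p k)).image fun a => (k, k + 1 + a)

/-- The leg-plus-diagonal region `D(q) ∪ B` of `λ = (p | q)`. -/
def DqB (N : ℕ) (q : ℕ → ℕ) : Finset Box :=
  (Finset.range N).biUnion fun k => (Finset.range (q k + 1)).image fun b => (k + b, k)

/-- The semistandard conditions restricted to a region `R`. -/
def SSYTOn (R : Finset Box) (t : Box → ℕ) : Prop :=
  (∀ i j : ℕ, (i, j) ∈ R → (i, j + 1) ∈ R → t (i, j) ≤ t (i, j + 1)) ∧
  (∀ i j : ℕ, (i, j) ∈ R → (i + 1, j) ∈ R → t (i, j) < t (i + 1, j))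

/-- Positive entries plus semistandard conditions on a region. -/
def IsSSYTOn (θ : Finset Box) (t : Box → ℕ) : Prop :=
  (∀ x ∈ θ, 0 < t x) ∧ SSYTOn θ t

/-- A `σ`-tableau of shape `λ = (p | q)` (Frobenius notation, `0`-indexed):
(I) rows weakly increase within the arm region `D(p)`,
(II) columns strictly increase within the leg-plus-diagonal region `D(q) ∪ B`,
(III) `t (σ i, σ i) ≤ t (i, i+1)` whenever the arm of row `i` is nonempty. -/
structure IsSigmaTab (N : ℕ) (p q : ℕ → ℕ) (σ : Equiv.Perm (Fin N)) (t : Box → ℕ) : Prop where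
  pos : ∀ x ∈ frobShape N p q, 0 < t x
  rowArm : ∀ k : ℕ, k < N → ∀ j : ℕ, k < j → j < k + p k → t (k, j) ≤ t (k, j + 1)
  colLeg : ∀ k : ℕ, k < N → ∀ i : ℕ, k ≤ i → i < k + q k → t (i, k) < t (i + 1, k)
  diagCond : ∀ i : Fin N, 0 < p i.1 → t ((σ i).1, (σ i).1) ≤ t (i.1, i.1 + 1)

/-- The hook tableau `T_k(σ)`: top row `(t(σk,σk), t(k,k+1), …, t(k,k+p_k))`,
first column continuing with `t(σk+1, σk), …, t(σk + q_{σk}, σk)`;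
value `1` outside the hook shape. -/
def hookOf {N : ℕ} (p q : ℕ → ℕ) (σ : Equiv.Perm (Fin N)) (t : Box → ℕ) (k : Fin N) :
    Box → ℕ := fun x =>
  if x.1 = 0 ∧ x.2 ≤ p k.1 then
    if x.2 = 0 then t ((σ k).1, (σ k).1) else t (k.1, k.1 + x.2)
  else if x.2 = 0 ∧ 0 < x.1 ∧ x.1 ≤ q (σ k).1 then t ((σ k).1 + x.1, (σ k).1)
  else 1

/-- A failure of the semistandard condition at the north-east boundary of the
main diagonal, at the box `(k, k+1)`. -/
def BoundaryFail (N : ℕ) (p q : ℕ → ℕ) (t : Box → ℕ) (k : ℕ) : Prop :=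
  k < N ∧ 0 < p k ∧
    (t (k, k + 1) < t (k, k) ∨
      ((k + 1, k + 1) ∈ frobShape N p q ∧ t (k + 1, k + 1) ≤ t (k, k + 1)))

/-- A bound on the coordinates of a shape. -/
def bnd (θ : Finset Box) : ℕ := θ.sup fun x => max x.1 x.2

/-- The transpose of a shape with respect to the anti-diagonal. -/
def adt (θ : Finset Box) : Finset Box := θ.image fun x => (bnd θ - x.2, bnd θ - x.1)

/-- The anti-diagonal transpose of a filling of `θ`. -/
def adtFill {α : Type*} (θ : Finset Box) (γ : Box → α) : Box → α :=
  fun x => γ (bnd θ - x.2, bnd θ - x.1)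

/-- Skew shapes: set differences of Young diagrams of partitions `μ ⊆ λ`. -/
def IsSkewShape (θ : Finset Box) : Prop :=
  ∃ lam mu : ℕ → ℕ, Antitone lam ∧ Antitone mu ∧ (∀ i, mu i ≤ lam i) ∧
    ∀ x : Box, x ∈ θ ↔ mu x.1 ≤ x.2 ∧ x.2 < lam x.1

/-- Shapes of ordinary (non-skew) Young diagrams: closed to the left and upwards. -/
def IsYoungShape (θ : Finset Box) : Prop :=
  (∀ i j : ℕ, (i + 1, j) ∈ θ → (i, j) ∈ θ) ∧ (∀ i j : ℕ, (i, j + 1) ∈ θ → (i, j) ∈ θ)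

/-- The quasi-symmetric Schur function `S_θ(γ)` as a formal power series in the
variables `t₁, t₂, …` (indexed by `ℕ`): the coefficient of a monomial `d` is
the number of semistandard tableaux `T` of shape `θ` with
`∏_{x ∈ θ} t_{T x}^{γ x} = t^d`. -/
noncomputable def schurQ (θ : Finset Box) (γ : Box → ℕ) : MvPowerSeries ℕ ℚ :=
  fun d => (Nat.card {T : SSYT θ // (∑ x ∈ θ, Finsupp.single (T.1 x) (γ x)) = d} : ℚ)

/-- The monomial quasi-symmetric function `M_I = ∑_{0 < m₁ < … < m_k} ∏ t_{mᵢ}^{Iᵢ}`. -/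
noncomputable def monomialQ (I : List ℕ) : MvPowerSeries ℕ ℚ :=
  fun d => (Nat.card {m : Fin I.length → ℕ // StrictMono m ∧ (∀ i, 0 < m i) ∧
    (∑ i, Finsupp.single (m i) (I.get i)) = d} : ℚ)

/-- The coarsening of a composition determined by a set `B` of internal break
points: adjacent parts are merged unless separated by a break in `B`. -/
def coarsenFrom (B : Finset ℕ) : ℕ → List ℕ → List ℕ
  | _, [] => []
  | _, [a] => [a]
  | n, a :: b :: rest =>
      if n ∈ B then a :: coarsenFrom B (n + 1) (b :: rest)
      else coarsenFrom B (n + 1) ((a + b) :: rest)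

/-- Translation of a shape by `(u, v)`. -/
def shiftShape (u v : ℕ) (θ : Finset Box) : Finset Box := θ.image fun x => (u + x.1, v + x.2)

/-- The laced hook shape `[λ_* | (p i + 1, 1^{q j}) | λ^*]`, with the middle hook placed
at offset `(u, v)`, the south-west wing `A` attached when `j = 0` and the north-east
wing `C` attached when `i = 0`. -/
def lacedHookShape (A C : Finset Box) (u v : ℕ) (p q : ℕ → ℕ) (i j : ℕ) : Finset Box :=
  (if j = 0 then A else ∅) ∪ shiftShape u v (hookShape (p i) (q j)) ∪ (if i = 0 then C else ∅)

/-- The laced hook tableau `T̃_k(σ)`: the wing entries of `tt` together with the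
hook tableau `T_k(σ)` of the middle part (placed at offset `(u, v)`). -/
def lacedHookTab {N : ℕ} (A C : Finset Box) (u v : ℕ) (p q : ℕ → ℕ)
    (σ : Equiv.Perm (Fin N)) (tt : Box → ℕ) (k : Fin N) : Box → ℕ := fun x =>
  if ((σ k).1 = 0 ∧ x ∈ A) ∨ (k.1 = 0 ∧ x ∈ C) then tt x
  else if u ≤ x.1 ∧ v ≤ x.2 then
    hookOf p q σ (fun y => tt (u + y.1, v + y.2)) k (x.1 - u, x.2 - v)
  else 1
lemma prodFrob (N : ℕ) (p q : ℕ → ℕ) (f : Box → ℂ) :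
    ∏ x ∈ frobShape N p q, f x =
      ∏ k ∈ Finset.range N,
        ((∏ a ∈ Finset.range (p k + 1), f (k, k + a)) *
          ∏ b ∈ Finset.range (q k), f (k + 1 + b, k)) := by
  rw [frobShape, Finset.prod_biUnion ?hd]
  case hd =>
    intro k _ l _ hkl
    simp only [Finset.disjoint_left, Finset.mem_union, Finset.mem_image, Finset.mem_range,
      Function.onFun]
    rintro x (⟨a, ha, rfl⟩ | ⟨b, hb, rfl⟩) h <;>
    · rcases h with ⟨a', ha', h⟩ | ⟨b', hb', h⟩ <;>
      · simp only [Prod.mk.injEq] at h; omega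
  refine Finset.prod_congr rfl fun k hk => ?_
  rw [Finset.prod_union ?hd2, Finset.prod_image ?hi1, Finset.prod_image ?hi2]
  case hd2 =>
    simp only [Finset.disjoint_left, Finset.mem_image, Finset.mem_range]
    rintro x ⟨a, ha, rfl⟩ ⟨b, hb, h⟩
    simp only [Prod.mk.injEq] at h; omega
  case hi1 => intro a _ b _ h; simp only [Prod.mk.injEq] at h; omega
  case hi2 => intro a _ b _ h; simp only [Prod.mk.injEq] at h; omega

/-- Factorization of the weight of a `σ`-tableau: for a diagonally constant complex
filling `s(i,j) = z(j - i)` of `λ = (p | q)`, the weight of a `σ`-tableau `t` is the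
product of the weights of its hook tableaux `T_k(σ)` with the corresponding hook
fillings `(z₀, z₁, …, z_{p_k}; z_{-1}, …, z_{-q_{σ(k)}})`. -/
theorem weight_factorization (N : ℕ) (p q : ℕ → ℕ) (hfr : FrobData N p q)
    (z : ℤ → ℂ) (σ : Equiv.Perm (Fin N)) (t : Box → ℕ)
    (ht : IsSigmaTab N p q σ t) :
    wt (frobShape N p q) (fun x => z ((x.2 : ℤ) - x.1)) t =
      ∏ k : Fin N,
        wt (hookShape (p k.1) (q (σ k).1)) (fun x => z ((x.2 : ℤ) - x.1))
          (hookOf p q σ t k) := by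
  classical
  set D : ℕ → ℂ := fun k => (t (k, k) : ℂ) ^ (-(z 0)) with hD
  set A : ℕ → ℂ := fun k => ∏ a ∈ Finset.range (p k),
      (t (k, k + (a + 1)) : ℂ) ^ (-(z ((a : ℤ) + 1))) with hA
  set L : ℕ → ℂ := fun m => ∏ b ∈ Finset.range (q m),
      (t (m + 1 + b, m) : ℂ) ^ (-(z (-((b : ℤ) + 1)))) with hL
  have hLHS : wt (frobShape N p q) (fun x => z ((x.2 : ℤ) - x.1)) t =
      ∏ k ∈ Finset.range N, D k * A k * L k := by
    rw [wt, prodFrob]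
    refine Finset.prod_congr rfl fun k _ => ?_
    have harm : (∏ a ∈ Finset.range (p k + 1),
        (t (k, k + a) : ℂ) ^ (-(z (((k + a : ℕ) : ℤ) - (k : ℕ))))) = D k * A k := by
      rw [Finset.prod_range_succ']
      rw [mul_comm]
      congr 1
      · simp [hD]
      · refine Finset.prod_congr rfl fun a _ => ?_
        congr 3
        push_cast; ring
    have hleg : (∏ b ∈ Finset.range (q k),
        (t (k + 1 + b, k) : ℂ) ^ (-(z (((k : ℕ) : ℤ) - (k + 1 + b : ℕ))))) = L k := by
      refine Finset.prod_congr rfl fun b _ => ?_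
      congr 3
      push_cast; ring
    simpa using congrArg₂ (· * ·) harm hleg
  have hRHS : ∀ k : Fin N,
      wt (hookShape (p k.1) (q (σ k).1)) (fun x => z ((x.2 : ℤ) - x.1)) (hookOf p q σ t k) =
        D (σ k).1 * A k.1 * L (σ k).1 := by
    intro k
    rw [wt, hookShape, prodFrob, Finset.prod_range_one]
    have harm : (∏ a ∈ Finset.range (p k.1 + 1),
        (hookOf p q σ t k (0, 0 + a) : ℂ) ^ (-(z (((0 + a : ℕ) : ℤ) - (0 : ℕ))))) =
        D (σ k).1 * A k.1 := by
      rw [Finset.prod_range_succ', mul_comm]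
      refine congrArg₂ (· * ·) ?_ ?_
      · simp [hD, hookOf]
      · refine Finset.prod_congr rfl fun a ha => ?_
        have ha' : a + 1 ≤ p k.1 := Finset.mem_range.mp ha
        have hv : hookOf p q σ t k (0, 0 + (a + 1)) = t (k.1, k.1 + (a + 1)) := by
          simp [hookOf, ha']
        rw [hv]
        congr 3
        push_cast; ring
    have hleg : (∏ b ∈ Finset.range (q (σ k).1),
        (hookOf p q σ t k (0 + 1 + b, 0) : ℂ) ^ (-(z (((0 : ℕ) : ℤ) - (0 + 1 + b : ℕ))))) =
        L (σ k).1 := by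
      refine Finset.prod_congr rfl fun b hb => ?_
      have hb' : 0 + 1 + b ≤ q (σ k).1 := by
        have := Finset.mem_range.mp hb; omega
      have hv : hookOf p q σ t k (0 + 1 + b, 0) = t ((σ k).1 + 1 + b, (σ k).1) := by
        unfold hookOf
        split_ifs with h1 h2 h3
        · exact absurd h1.1 (by simp)
        · exact absurd h1.1 (by simp)
        · congr 1; simp; omega
        · exact absurd ⟨rfl, by simp, by simpa using hb'⟩ h3
      rw [hv]
      congr 3
      push_cast; ring
    simpa using congrArg₂ (· * ·) harm hleg
  rw [hLHS, Finset.prod_congr rfl fun (k : Fin N) _ => hRHS k]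
  calc ∏ k ∈ Finset.range N, D k * A k * L k
      = ∏ k : Fin N, D k.1 * A k.1 * L k.1 := Finset.prod_range _
    _ = (∏ k : Fin N, A k.1) * ((∏ k : Fin N, D k.1) * (∏ k : Fin N, L k.1)) := by
        rw [← Finset.prod_mul_distrib, ← Finset.prod_mul_distrib]
        exact Finset.prod_congr rfl fun k _ => by ring
    _ = (∏ k : Fin N, A k.1) * ((∏ k : Fin N, D (σ k).1) * (∏ k : Fin N, L (σ k).1)) := by
        rw [Equiv.prod_comp σ (fun k : Fin N => D k.1),
          Equiv.prod_comp σ (fun k : Fin N => L k.1)]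
    _ = ∏ k : Fin N, D (σ k).1 * A k.1 * L (σ k).1 := by
        rw [← Finset.prod_mul_distrib, ← Finset.prod_mul_distrib]
        exact Finset.prod_congr rfl fun k _ => by ring
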